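/- Let m ≥ 1 be an integer, d ≥ 2, and β ≥ 2π√d. Let Γ ⊂ 𝕋^d be a finite set such that Δ_∞(Γ) ≥ β/m and such that no γ ∈ Γ satisfies |γ|_∞ < β/m (i.e., Γ is disjoint from the open ℓ∞-cube of half-side β/m centered at 0). Then Σ_{γ∈Γ} |D_m(γ)|² ≤ 4π²d/β² and Σ_{γ∈Γ} |∇D_m(γ)|² ≤ 16π⁴d²m²/β². -/

import Mathlib

noncomputable section

open Real

/-- The normalized one-dimensional Dirichlet kernel
`d_m(t) = (2m+1)⁻¹ ∑_{k=-m}^{m} e^{2πikt}`, written via its (equal) real form. -/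
def dirKer (m : ℕ) (t : ℝ) : ℝ :=
  (2 * m + 1 : ℝ)⁻¹ * ∑ k ∈ Finset.Icc (-(m : ℤ)) (m : ℤ), Real.cos (2 * Real.pi * k * t)

/-- The square (tensor-product) Dirichlet kernel `D_m(ξ) = ∏ i d_m(ξ i)` on `ℝ^d`;
it is `ℤ^d`-periodic, hence well-defined on the torus `𝕋^d`. -/
def sqDirKer (d m : ℕ) (ξ : EuclideanSpace ℝ (Fin d)) : ℝ :=
  ∏ i, dirKer m (ξ i)

/-- The ℓ∞ torus distance on `𝕋^d = ℝ^d/ℤ^d` in terms of representatives: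
`|x - y|_∞ = min_{n ∈ ℤ^d} max_i |x_i - y_i + n_i|`. -/
def torusDistInf {d : ℕ} (x y : EuclideanSpace ℝ (Fin d)) : ℝ :=
  ⨅ n : Fin d → ℤ, ⨆ i, |x i - y i + (n i : ℝ)|

def dirKer' (m : ℕ) (t : ℝ) : ℝ :=
  (2 * m + 1 : ℝ)⁻¹ * ∑ k ∈ Finset.Icc (-(m : ℤ)) (m : ℤ),
    -Real.sin (2 * Real.pi * k * t) * (2 * Real.pi * k)

lemma sin_mul_cos_sum (m : ℕ) (t : ℝ) :
    Real.sin (π * t) * ∑ k ∈ Finset.Icc (-(m : ℤ)) (m : ℤ), Real.cos (2 * π * k * t)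
      = Real.sin ((2 * m + 1) * (π * t)) := by
  induction m with
  | zero => simp
  | succ n ih =>
    have hsplit : Finset.Icc (-((n + 1 : ℕ) : ℤ)) ((n + 1 : ℕ) : ℤ)
        = insert (-((n : ℤ) + 1)) (insert ((n : ℤ) + 1) (Finset.Icc (-(n : ℤ)) (n : ℤ))) := by
      ext k
      simp only [Finset.mem_Icc, Finset.mem_insert]
      omega
    rw [hsplit, Finset.sum_insert (by simp only [Finset.mem_insert, Finset.mem_Icc]; omega),
      Finset.sum_insert (by simp only [Finset.mem_Icc]; omega)]
    push_cast
    have e1 : 2 * π * -((n : ℝ) + 1) * t = -((2 * n + 2) * (π * t)) := by ring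
    have e2 : 2 * π * ((n : ℝ) + 1) * t = (2 * n + 2) * (π * t) := by ring
    rw [e1, e2, Real.cos_neg]
    have e3 : (2 * ((n : ℝ) + 1) + 1) * (π * t) = (2 * n + 2) * (π * t) + π * t := by ring
    rw [e3, Real.sin_add]
    rw [show (2 * (n : ℝ) + 1) * (π * t) = (2 * n + 2) * (π * t) - π * t by ring,
      Real.sin_sub] at ih
    linear_combination ih

lemma hasDerivAt_dirKer (m : ℕ) (t : ℝ) : HasDerivAt (dirKer m) (dirKer' m t) t := by
  unfold dirKer dirKer'
  apply HasDerivAt.const_mul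
  apply HasDerivAt.fun_sum
  intro k _
  have h : HasDerivAt (fun t : ℝ => 2 * π * k * t) (2 * π * k) t := by
    simpa using (hasDerivAt_id t).const_mul (2 * π * (k : ℝ))
  exact h.cos

lemma card_Icc_int (m : ℕ) : (Finset.Icc (-(m : ℤ)) (m : ℤ)).card = 2 * m + 1 := by
  rw [Int.card_Icc]
  omega

lemma abs_dirKer_le_one (m : ℕ) (t : ℝ) : |dirKer m t| ≤ 1 := by
  unfold dirKer
  rw [abs_mul]
  have h1 : |∑ k ∈ Finset.Icc (-(m : ℤ)) (m : ℤ), Real.cos (2 * π * k * t)|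
      ≤ (2 * m + 1 : ℝ) := by
    calc |∑ k ∈ Finset.Icc (-(m : ℤ)) (m : ℤ), Real.cos (2 * π * k * t)|
        ≤ ∑ k ∈ Finset.Icc (-(m : ℤ)) (m : ℤ), |Real.cos (2 * π * k * t)| :=
          Finset.abs_sum_le_sum_abs _ _
      _ ≤ ∑ _k ∈ Finset.Icc (-(m : ℤ)) (m : ℤ), 1 :=
          Finset.sum_le_sum fun k _ => Real.abs_cos_le_one _
      _ = (2 * m + 1 : ℝ) := by rw [Finset.sum_const, card_Icc_int]; push_cast; ring
  have h2 : (0:ℝ) < 2 * m + 1 := by positivity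
  rw [abs_inv, abs_of_pos h2]
  rw [inv_mul_le_iff₀ h2]
  simpa using h1

lemma abs_dirKer'_le (m : ℕ) (t : ℝ) : |dirKer' m t| ≤ 2 * π * m := by
  unfold dirKer'
  rw [abs_mul]
  have h2 : (0:ℝ) < 2 * m + 1 := by positivity
  have h1 : |∑ k ∈ Finset.Icc (-(m : ℤ)) (m : ℤ), -Real.sin (2 * π * k * t) * (2 * π * k)|
      ≤ (2 * m + 1 : ℝ) * (2 * π * m) := by
    calc |∑ k ∈ Finset.Icc (-(m : ℤ)) (m : ℤ), -Real.sin (2 * π * k * t) * (2 * π * k)|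
        ≤ ∑ k ∈ Finset.Icc (-(m : ℤ)) (m : ℤ), |(-Real.sin (2 * π * k * t)) * (2 * π * k)| :=
          Finset.abs_sum_le_sum_abs _ _
      _ ≤ ∑ _k ∈ Finset.Icc (-(m : ℤ)) (m : ℤ), 2 * π * m := by
          apply Finset.sum_le_sum
          intro k hk
          rw [Finset.mem_Icc] at hk
          have hk' : |(k : ℝ)| ≤ (m : ℝ) := by
            rw [← Int.cast_abs]
            exact_mod_cast abs_le.mpr hk
          rw [abs_mul, abs_neg]
          calc |Real.sin (2 * π * k * t)| * |2 * π * (k : ℝ)|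
              ≤ 1 * |2 * π * (k : ℝ)| := by
                apply mul_le_mul_of_nonneg_right (Real.abs_sin_le_one _) (abs_nonneg _)
            _ = 2 * π * |(k : ℝ)| := by
                rw [one_mul, abs_mul, abs_of_pos (by positivity : (0:ℝ) < 2 * π)]
            _ ≤ 2 * π * m := by
                exact mul_le_mul_of_nonneg_left hk' (by positivity)
      _ = (2 * m + 1 : ℝ) * (2 * π * m) := by rw [Finset.sum_const, card_Icc_int]; push_cast; ring
  rw [abs_inv, abs_of_pos h2]
  rw [inv_mul_le_iff₀ h2]
  calc |∑ k ∈ Finset.Icc (-(m : ℤ)) (m : ℤ), -Real.sin (2 * π * k * t) * (2 * π * k)|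
      ≤ (2 * m + 1 : ℝ) * (2 * π * m) := h1
    _ = (2 * m + 1) * (2 * π * ↑m) := by ring

lemma sin_mul_dirKer (m : ℕ) (t : ℝ) :
    Real.sin (π * t) * dirKer m t = (2 * (m : ℝ) + 1)⁻¹ * Real.sin ((2 * m + 1) * (π * t)) := by
  unfold dirKer
  rw [← sin_mul_cos_sum m t]
  ring

lemma sin_mul_dirKer' (m : ℕ) (t : ℝ) :
    Real.sin (π * t) * dirKer' m t
      = π * Real.cos ((2 * m + 1) * (π * t)) - π * Real.cos (π * t) * dirKer m t := by
  have hm : (2 * (m : ℝ) + 1) ≠ 0 := by positivity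
  have hsin : HasDerivAt (fun s : ℝ => Real.sin (π * s)) (Real.cos (π * t) * π) t := by
    have h : HasDerivAt (fun s : ℝ => π * s) π t := by
      simpa using (hasDerivAt_id t).const_mul π
    exact h.sin
  have h1 : HasDerivAt (fun s : ℝ => Real.sin (π * s) * dirKer m s)
      (Real.cos (π * t) * π * dirKer m t + Real.sin (π * t) * dirKer' m t) t :=
    hsin.mul (hasDerivAt_dirKer m t)
  have h2 : HasDerivAt (fun s : ℝ => (2 * (m : ℝ) + 1)⁻¹ * Real.sin ((2 * m + 1) * (π * s)))
      ((2 * (m : ℝ) + 1)⁻¹ * (Real.cos ((2 * m + 1) * (π * t)) * ((2 * m + 1) * π))) t := by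
    have h : HasDerivAt (fun s : ℝ => (2 * (m : ℝ) + 1) * (π * s)) ((2 * (m : ℝ) + 1) * π) t := by
      have := (hasDerivAt_id t).const_mul ((2 * (m : ℝ) + 1) * π)
      simpa [mul_assoc] using this
    exact (h.sin).const_mul _
  have h3 : HasDerivAt (fun s : ℝ => Real.sin (π * s) * dirKer m s)
      ((2 * (m : ℝ) + 1)⁻¹ * (Real.cos ((2 * m + 1) * (π * t)) * ((2 * m + 1) * π))) t := by
    apply h2.congr_of_eventuallyEq
    filter_upwards with s
    exact (sin_mul_dirKer m s)
  have h4 := h1.unique h3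
  have h5 : (2 * (m : ℝ) + 1)⁻¹ * (2 * (m : ℝ) + 1) = 1 := inv_mul_cancel₀ hm
  calc Real.sin (π * t) * dirKer' m t
      = (2 * (m : ℝ) + 1)⁻¹ * (Real.cos ((2 * m + 1) * (π * t)) * ((2 * m + 1) * π))
        - Real.cos (π * t) * π * dirKer m t := by linarith [h4]
    _ = π * Real.cos ((2 * m + 1) * (π * t)) - π * Real.cos (π * t) * dirKer m t := by
        field_simp

lemma two_mul_torus_le_abs_sin (t : ℝ) : 2 * |t - round t| ≤ |Real.sin (π * t)| := by
  set x := t - round t with hx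
  have hx1 : |x| ≤ 1 / 2 := by simpa using abs_sub_round t
  have hsin0 : Real.sin (π * (round t : ℝ)) = 0 := by
    rw [mul_comm]
    exact Real.sin_int_mul_pi _
  have hdecomp : Real.sin (π * t) = Real.sin (π * x) * Real.cos (π * round t) := by
    have : π * t = π * x + π * round t := by rw [hx]; ring
    rw [this, Real.sin_add, hsin0]
    ring
  have hcos1 : |Real.cos (π * (round t : ℝ))| = 1 := by
    have h4 : Real.cos (π * (round t : ℝ)) ^ 2 = 1 := by
      have := Real.sin_sq_add_cos_sq (π * (round t : ℝ))
      nlinarith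
    rw [← Real.sqrt_sq_eq_abs, h4, Real.sqrt_one]
  rw [hdecomp, abs_mul, hcos1, mul_one]
  have habs : |Real.sin (π * x)| = Real.sin (π * |x|) := by
    rcases abs_cases x with ⟨h, _⟩ | ⟨h, _⟩
    · rw [h]
      exact abs_of_nonneg (Real.sin_nonneg_of_nonneg_of_le_pi (by positivity)
        (by nlinarith [Real.pi_pos]))
    · rw [h, show π * -x = -(π * x) by ring, Real.sin_neg]
      exact abs_of_nonpos (Real.sin_nonpos_of_nonpos_of_neg_pi_le
        (by nlinarith [Real.pi_pos]) (by nlinarith [Real.pi_pos]))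
  rw [habs]
  have := Real.mul_le_sin (x := π * |x|) (by positivity)
    (by nlinarith [Real.pi_pos])
  calc 2 * |x| = 2 / π * (π * |x|) := by field_simp
    _ ≤ Real.sin (π * |x|) := this

lemma pow_one_add_le {ε : ℝ} (hε : 0 ≤ ε) :
    ∀ d : ℕ, 2 * d * ε ≤ 1 → (1 + ε) ^ d ≤ 1 + 2 * d * ε := by
  intro d
  induction d with
  | zero => simp
  | succ n ih =>
    intro h
    have hc : ((n:ℝ)+1) = (((n+1 : ℕ)):ℝ) := by push_cast; ring
    have hn : 2 * (n:ℝ) * ε ≤ 1 := by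
      have : (n:ℝ) ≤ ((n+1:ℕ):ℝ) := by push_cast; linarith
      nlinarith
    have h1 := ih hn
    have h2 : (0:ℝ) ≤ (1+ε)^n := by positivity
    rw [pow_succ]
    push_cast
    nlinarith [h1, hn, hε]

lemma abs_sub_lt_one_of_round_eq {u v : ℝ} (h : round u = round v) : |u - v| < 1 := by
  rw [round_eq, round_eq] at h
  have h1 := Int.floor_le (u + 1/2)
  have h2 := Int.lt_floor_add_one (u + 1/2)
  have h3 := Int.floor_le (v + 1/2)
  have h4 := Int.lt_floor_add_one (v + 1/2)
  rw [h] at h1 h2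
  rw [abs_sub_lt_iff]
  constructor <;> linarith

lemma sum_inv_sq_le : ∀ M : ℕ, 1 ≤ M →
    ∑ j ∈ Finset.Icc (1 : ℤ) (M : ℤ), (((j:ℝ) - 1/2)⁻¹) ^ 2 ≤ 5 - 1/(M:ℝ) := by
  intro M
  induction M with
  | zero => omega
  | succ n ih =>
    intro _
    rcases Nat.eq_zero_or_pos n with hn | hn
    · subst hn
      norm_num
    · have hsplit : Finset.Icc (1:ℤ) ((n+1 : ℕ) : ℤ)
          = insert ((n:ℤ)+1) (Finset.Icc (1:ℤ) (n:ℤ)) := by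
        ext k
        simp only [Finset.mem_Icc, Finset.mem_insert]
        omega
      rw [hsplit, Finset.sum_insert (by simp only [Finset.mem_Icc]; omega)]
      have h1 := ih hn
      have hnR : (1:ℝ) ≤ (n:ℝ) := by exact_mod_cast hn
      have key : ((((n:ℤ)+1 : ℤ):ℝ) - 1/2)⁻¹ ^ 2 ≤ 1/(n:ℝ) - 1/((n:ℝ)+1) := by
        push_cast
        have h2 : (0:ℝ) < (n:ℝ) + 1 - 1/2 := by linarith
        have h3 : (n:ℝ)*((n:ℝ)+1) ≤ ((n:ℝ) + 1 - 1/2)^2 := by nlinarith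
        have h4 : (0:ℝ) < (n:ℝ)*((n:ℝ)+1) := by nlinarith
        calc ((n:ℝ) + 1 - 1/2)⁻¹ ^ 2 = (((n:ℝ) + 1 - 1/2)^2)⁻¹ := by rw [inv_pow]
          _ ≤ ((n:ℝ)*((n:ℝ)+1))⁻¹ := by
              apply inv_anti₀ h4 h3
          _ = 1/(n:ℝ) - 1/((n:ℝ)+1) := by field_simp; ring
      push_cast at key ⊢
      linarith

lemma abs_sin_dirKer (m : ℕ) (t : ℝ) :
    (2 * (m:ℝ) + 1) * (|Real.sin (π * t)| * |dirKer m t|) ≤ 1 := by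
  have h := sin_mul_dirKer m t
  have hm : (0:ℝ) < 2 * m + 1 := by positivity
  calc (2 * (m:ℝ) + 1) * (|Real.sin (π * t)| * |dirKer m t|)
      = |(2 * (m:ℝ) + 1) * (Real.sin (π * t) * dirKer m t)| := by
        rw [abs_mul, abs_mul, abs_of_pos hm]
    _ = |Real.sin ((2 * m + 1) * (π * t))| := by
        rw [h]
        rw [show (2*(m:ℝ)+1) * ((2*(m:ℝ)+1)⁻¹ * Real.sin ((2*m+1)*(π*t)))
          = ((2*(m:ℝ)+1) * (2*(m:ℝ)+1)⁻¹) * Real.sin ((2*m+1)*(π*t)) by ring,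
          mul_inv_cancel₀ (ne_of_gt hm), one_mul]
    _ ≤ 1 := Real.abs_sin_le_one _

lemma abs_sin_dirKer' (m : ℕ) (t : ℝ) :
    |Real.sin (π * t)| * |dirKer' m t| ≤ 2 * π := by
  have h := sin_mul_dirKer' m t
  have hD := abs_dirKer_le_one m t
  have hπ := Real.pi_pos
  calc |Real.sin (π * t)| * |dirKer' m t| = |Real.sin (π * t) * dirKer' m t| := (abs_mul _ _).symm
    _ = |π * Real.cos ((2 * m + 1) * (π * t)) - π * Real.cos (π * t) * dirKer m t| := by rw [h]
    _ ≤ |π * Real.cos ((2 * m + 1) * (π * t))| + |π * Real.cos (π * t) * dirKer m t| :=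
        abs_sub _ _
    _ ≤ 2 * π := by
        rw [abs_mul, abs_mul, abs_mul, abs_of_pos hπ]
        have h1 := Real.abs_cos_le_one ((2 * m + 1) * (π * t))
        have h2 := Real.abs_cos_le_one (π * t)
        have h3 := abs_nonneg (dirKer m t)
        have h5 : |Real.cos (π * t)| * |dirKer m t| ≤ 1 * 1 :=
          mul_le_mul h2 hD h3 zero_le_one
        nlinarith

lemma key_bounds (m : ℕ) (hm : 1 ≤ m) (δ : ℝ) (hδ : 0 < δ) (t : ℝ)
    (hcne : round ((t - round t) / δ) ≠ 0) :
    (dirKer m t)^2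
        ≤ ((2 * (2*(m:ℝ)+1) * δ * ((|round ((t - round t) / δ)| : ℝ) - 1/2))⁻¹)^2 ∧
    (dirKer' m t)^2
        ≤ 36 * π^2 * (m:ℝ)^2
          * ((2 * (2*(m:ℝ)+1) * δ * ((|round ((t - round t) / δ)| : ℝ) - 1/2))⁻¹)^2 := by
  have hπ := Real.pi_pos
  set x := t - round t with hx
  set c := round (x / δ) with hcdef
  have hmR : (1:ℝ) ≤ m := by exact_mod_cast hm
  have hc1 : (1:ℝ) ≤ (|c| : ℝ) := by exact_mod_cast Int.one_le_abs hcne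
  set A := δ * ((|c| : ℝ) - 1/2) with hA
  have hApos : 0 < A := by rw [hA]; nlinarith
  have hxlow : A ≤ |x| := by
    have h1 := abs_sub_round (x / δ)
    have h3 : |(c:ℝ)| - |x / δ| ≤ |(c:ℝ) - x / δ| := abs_sub_abs_le_abs_sub _ _
    rw [abs_sub_comm] at h3
    have h4 : |(c:ℝ)| = (|c| : ℝ) := by push_cast; rfl
    have h2 : (|c| : ℝ) - 1/2 ≤ |x / δ| := by
      rw [← hcdef] at h1
      rw [h4] at h3
      linarith
    calc A ≤ δ * |x / δ| := by rw [hA]; nlinarith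
      _ = |x| := by rw [abs_div, abs_of_pos hδ]; field_simp
  have hsinlow : 2 * A ≤ |Real.sin (π * t)| := by
    have h := two_mul_torus_le_abs_sin t
    rw [← hx] at h
    linarith
  set v := (2*(m:ℝ)+1) * (2 * A) with hv
  have hvpos : 0 < v := by rw [hv]; positivity
  have hveq : 2 * (2*(m:ℝ)+1) * δ * ((|c| : ℝ) - 1/2) = v := by rw [hv, hA]; ring
  rw [hveq]
  have hvsq : 0 < v^2 := by positivity
  constructor
  · have s1 : v * |dirKer m t| ≤ 1 := by
      have h1 := abs_sin_dirKer m t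
      have h2 := mul_le_mul_of_nonneg_right hsinlow (abs_nonneg (dirKer m t))
      have h3 : v * |dirKer m t| ≤ (2*(m:ℝ)+1) * (|Real.sin (π * t)| * |dirKer m t|) := by
        rw [hv]
        nlinarith [abs_nonneg (dirKer m t)]
      linarith
    have key : (dirKer m t)^2 * v^2 ≤ 1 := by
      have h0 : 0 ≤ v * |dirKer m t| := by positivity
      nlinarith [s1, h0, sq_abs (dirKer m t)]
    calc (dirKer m t)^2 ≤ 1 / v^2 := by rw [le_div_iff₀ hvsq]; exact key
      _ = (v⁻¹)^2 := by rw [inv_pow, one_div]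
  · have s1 : 2 * A * |dirKer' m t| ≤ 2 * π := by
      have h1 := abs_sin_dirKer' m t
      have h2 := mul_le_mul_of_nonneg_right hsinlow (abs_nonneg (dirKer' m t))
      linarith
    have key : (dirKer' m t)^2 * v^2 ≤ 36 * π^2 * (m:ℝ)^2 := by
      have h0 : 0 ≤ 2 * A * |dirKer' m t| := by positivity
      have hsq : (2 * A * |dirKer' m t|)^2 ≤ (2*π)^2 := pow_le_pow_left₀ h0 s1 2
      have hexp : (dirKer' m t)^2 * v^2 = (2*(m:ℝ)+1)^2 * (2 * A * |dirKer' m t|)^2 := by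
        rw [hv]
        rw [show (2 * A * |dirKer' m t|)^2 = (2*A)^2 * |dirKer' m t|^2 by ring, sq_abs]
        ring
      rw [hexp]
      have hm3 : (2*(m:ℝ)+1)^2 ≤ 9 * (m:ℝ)^2 := by nlinarith
      have h4 : (0:ℝ) ≤ (2*π)^2 := by positivity
      calc (2*(m:ℝ)+1)^2 * (2 * A * |dirKer' m t|)^2
          ≤ (2*(m:ℝ)+1)^2 * (2*π)^2 := by
            apply mul_le_mul_of_nonneg_left hsq (by positivity)
        _ ≤ 36 * π^2 * (m:ℝ)^2 := by nlinarith
    calc (dirKer' m t)^2 ≤ (36 * π^2 * (m:ℝ)^2) / v^2 := by rw [le_div_iff₀ hvsq]; exact key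
      _ = 36 * π^2 * (m:ℝ)^2 * (v⁻¹)^2 := by rw [div_eq_mul_inv, inv_pow]

open RealInnerProductSpace in
lemma gradient_sqDirKer_norm_sq (d m : ℕ) (γ : EuclideanSpace ℝ (Fin d)) :
    ‖gradient (sqDirKer d m) γ‖^2
      = ∑ i, ((∏ j ∈ Finset.univ.erase i, dirKer m (γ j)) * dirKer' m (γ i))^2 := by
  classical
  have hder : ∀ i : Fin d, HasFDerivAt (fun ξ : EuclideanSpace ℝ (Fin d) => dirKer m (ξ i))
      (dirKer' m (γ i) • (EuclideanSpace.proj i : EuclideanSpace ℝ (Fin d) →L[ℝ] ℝ)) γ :=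
    fun i => by
    have h := (hasDerivAt_dirKer m (γ i)).comp_hasFDerivAt γ
      ((EuclideanSpace.proj i (𝕜 := ℝ)).hasFDerivAt (x := γ))
    exact h.congr_of_eventuallyEq (Filter.Eventually.of_forall fun ξ => rfl)
  have hF : HasFDerivAt (sqDirKer d m)
      (∑ i, (∏ j ∈ Finset.univ.erase i, dirKer m (γ j)) •
        (dirKer' m (γ i) • (EuclideanSpace.proj i : EuclideanSpace ℝ (Fin d) →L[ℝ] ℝ))) γ := by
    exact HasFDerivAt.finset_prod (fun i _ => hder i)
  have hgrad : ∀ i, gradient (sqDirKer d m) γ i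
      = (∏ j ∈ Finset.univ.erase i, dirKer m (γ j)) * dirKer' m (γ i) := by
    intro i
    have h1 : ⟪gradient (sqDirKer d m) γ, EuclideanSpace.single i (1:ℝ)⟫
        = gradient (sqDirKer d m) γ i := by
      rw [EuclideanSpace.inner_single_right]
      simp
    rw [← h1, gradient, hF.fderiv, InnerProductSpace.toDual_symm_apply]
    rw [ContinuousLinearMap.sum_apply]
    rw [Finset.sum_eq_single i]
    · simp [EuclideanSpace.proj]
    · intro j _ hji
      simp [EuclideanSpace.proj, EuclideanSpace.single_apply, hji]
    · intro hi
      exact absurd (Finset.mem_univ i) hi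
  have hnorm := EuclideanSpace.norm_eq (gradient (sqDirKer d m) γ)
  rw [hnorm, Real.sq_sqrt (by positivity)]
  apply Finset.sum_congr rfl
  intro i _
  rw [hgrad i, Real.norm_eq_abs, sq_abs]

/-- cell index of a point -/
def cellIdx (δ : ℝ) {d : ℕ} (γ : EuclideanSpace ℝ (Fin d)) (i : Fin d) : ℤ :=
  round ((γ i - round (γ i)) / δ)

/-- per-cell weight -/
def wt (b : ℝ) (j : ℤ) : ℝ := if j = 0 then 1 else ((b * ((|j| : ℝ) - 1/2))⁻¹)^2

lemma wt_nonneg (b : ℝ) (j : ℤ) : 0 ≤ wt b j := by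
  unfold wt; split
  · norm_num
  · positivity

lemma wt_zero (b : ℝ) : wt b 0 = 1 := by simp [wt]

set_option maxHeartbeats 1000000 in
/-- **Energy bounds for ℓ∞-separated sets avoiding the origin on the torus.**
If `Δ_∞(Γ) ≥ β/m` and no point of `Γ` has ℓ∞ torus norm `< β/m`, then
`∑_{γ∈Γ} |D_m(γ)|² ≤ 4π²d/β²` and `∑_{γ∈Γ} |∇D_m(γ)|² ≤ 16π⁴d²m²/β²`. -/
theorem stmt10 (m : ℕ) (hm : 1 ≤ m) (d : ℕ) (hd : 2 ≤ d)
    (β : ℝ) (hβ : 2 * Real.pi * Real.sqrt d ≤ β)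
    (Γ : Finset (EuclideanSpace ℝ (Fin d)))
    (hsep : ∀ γ ∈ Γ, ∀ γ' ∈ Γ, γ ≠ γ' → β / m ≤ torusDistInf γ γ')
    (hfar : ∀ γ ∈ Γ, β / m ≤ torusDistInf γ 0) :
    ∑ γ ∈ Γ, sqDirKer d m γ ^ 2 ≤ 4 * Real.pi ^ 2 * (d : ℝ) / β ^ 2 ∧
    ∑ γ ∈ Γ, ‖gradient (sqDirKer d m) γ‖ ^ 2
        ≤ 16 * Real.pi ^ 4 * (d : ℝ) ^ 2 * (m : ℝ) ^ 2 / β ^ 2 := by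
  classical
  have hπ := Real.pi_pos
  have hπ3 : (3:ℝ) < π := Real.pi_gt_three
  have hd1 : (1:ℝ) ≤ (d:ℝ) := by
    have : (1:ℕ) ≤ d := by omega
    exact_mod_cast this
  have hsqrtd : (1:ℝ) ≤ Real.sqrt d := by
    rw [show (1:ℝ) = Real.sqrt 1 by simp]
    exact Real.sqrt_le_sqrt hd1
  have hβ6 : 6 ≤ β := le_trans (by nlinarith) hβ
  have hβpos : (0:ℝ) < β := by linarith
  have hβsq : 4 * π^2 * d ≤ β^2 := by
    have h2 : Real.sqrt (d:ℝ) ^ 2 = (d:ℝ) := Real.sq_sqrt (by positivity)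
    have ha : 0 ≤ 2*π*Real.sqrt d := by positivity
    have hsq := mul_le_mul hβ hβ ha (le_trans ha hβ)
    nlinarith [hsq, h2]
  have hm0 : (0:ℝ) < m := by exact_mod_cast hm
  have hmR : (1:ℝ) ≤ m := by exact_mod_cast hm
  set δ : ℝ := β / m with hδdef
  have hδpos : 0 < δ := div_pos hβpos hm0
  set b : ℝ := 2 * (2*(m:ℝ)+1) * δ with hbdef
  have hbpos : 0 < b := by positivity
  have hb4β : 4 * β ≤ b := by
    rw [hbdef, hδdef]
    have h1 : 4 * β * m ≤ 2*(2*(m:ℝ)+1) * β := by nlinarith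
    calc 4 * β = 4 * β * m / m := by field_simp
      _ ≤ 2*(2*(m:ℝ)+1) * β / m := (div_le_div_iff_of_pos_right hm0).mpr h1
      _ = 2*(2*(m:ℝ)+1) * (β / m) := by ring
  -- per-coordinate bounds
  have keyA : ∀ (γ : EuclideanSpace ℝ (Fin d)) (i : Fin d),
      (dirKer m (γ i))^2 ≤ wt b (cellIdx δ γ i) := by
    intro γ i
    unfold cellIdx wt
    by_cases hc : round ((γ i - round (γ i)) / δ) = 0
    · rw [if_pos hc]
      have h1 := abs_dirKer_le_one m (γ i)
      nlinarith [abs_nonneg (dirKer m (γ i)), sq_abs (dirKer m (γ i))]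
    · rw [if_neg hc, hbdef]
      exact (key_bounds m hm δ hδpos (γ i) hc).1
  have keyB : ∀ (γ : EuclideanSpace ℝ (Fin d)) (i : Fin d),
      (dirKer' m (γ i))^2 ≤ 36 * π^2 * (m:ℝ)^2 * wt b (cellIdx δ γ i) := by
    intro γ i
    unfold cellIdx wt
    by_cases hc : round ((γ i - round (γ i)) / δ) = 0
    · rw [if_pos hc]
      have h1 := abs_dirKer'_le m (γ i)
      nlinarith [abs_nonneg (dirKer' m (γ i)), sq_abs (dirKer' m (γ i)), hπ, hm0]
    · rw [if_neg hc, hbdef]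
      exact (key_bounds m hm δ hδpos (γ i) hc).2
  -- torus dist upper bounds
  have hne : Nonempty (Fin d) := ⟨⟨0, by omega⟩⟩
  have hTD_le : ∀ (x y : EuclideanSpace ℝ (Fin d)) (n : Fin d → ℤ),
      torusDistInf x y ≤ ⨆ i, |x i - y i + (n i : ℝ)| := by
    intro x y n
    apply ciInf_le
    refine ⟨0, ?_⟩
    rintro r ⟨n', rfl⟩
    exact Real.iSup_nonneg fun i => abs_nonneg _
  have hsup_lt : ∀ (f : Fin d → ℝ) (c : ℝ), (∀ i, f i < c) → (⨆ i, f i) < c := by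
    intro f c hf
    obtain ⟨i0, hi0⟩ := Finite.exists_max f
    exact lt_of_le_of_lt (ciSup_le hi0) (hf i0)
  have hfar' : ∀ γ ∈ Γ, ∃ i, δ ≤ |γ i - round (γ i)| := by
    intro γ hγ
    by_contra hcon
    push_neg at hcon
    have h1 := hTD_le γ 0 (fun i => -round (γ i))
    have h2 : (⨆ i, |γ i - (0 : EuclideanSpace ℝ (Fin d)) i + ((-round (γ i) : ℤ) : ℝ)|) < δ := by
      apply hsup_lt
      intro i
      have e : γ i - (0 : EuclideanSpace ℝ (Fin d)) i + ((-round (γ i) : ℤ) : ℝ)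
          = γ i - round (γ i) := by
        have h0 : (0 : EuclideanSpace ℝ (Fin d)) i = 0 := rfl
        rw [h0]
        push_cast
        ring
      rw [e]
      exact hcon i
    have h3 := hfar γ hγ
    linarith
  have hinj : ∀ γ ∈ Γ, ∀ γ' ∈ Γ, cellIdx δ γ = cellIdx δ γ' → γ = γ' := by
    intro γ hγ γ' hγ' hcc
    by_contra hne'
    have h1 := hTD_le γ γ' (fun i => round (γ' i) - round (γ i))
    have h2 : (⨆ i, |γ i - γ' i + ((round (γ' i) - round (γ i) : ℤ) : ℝ)|) < δ := by
      apply hsup_lt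
      intro i
      have h3 : round ((γ i - round (γ i))/δ) = round ((γ' i - round (γ' i))/δ) := by
        have := congrFun hcc i
        unfold cellIdx at this
        exact this
      have h4 := abs_sub_lt_one_of_round_eq h3
      have e : γ i - γ' i + ((round (γ' i) - round (γ i) : ℤ) : ℝ)
          = δ * ((γ i - round (γ i))/δ - (γ' i - round (γ' i))/δ) := by
        field_simp
        push_cast
        ring
      rw [e, abs_mul, abs_of_pos hδpos]
      calc δ * |(γ i - round (γ i))/δ - (γ' i - round (γ' i))/δ| < δ * 1 :=
            mul_lt_mul_of_pos_left h4 hδpos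
        _ = δ := mul_one δ
    have h3 := hsep γ hγ γ' hγ' hne'
    linarith
  set P := Fintype.piFinset (fun _ : Fin d => Finset.Icc (-(m:ℤ)) (m:ℤ)) with hP
  have h0P : (0 : Fin d → ℤ) ∈ P := by
    rw [hP, Fintype.mem_piFinset]
    intro i
    simp only [Pi.zero_apply, Finset.mem_Icc]
    omega
  have hccmem : ∀ γ ∈ Γ, cellIdx δ γ ∈ P.erase 0 := by
    intro γ hγ
    rw [Finset.mem_erase]
    constructor
    · obtain ⟨i, hi⟩ := hfar' γ hγ
      intro h0
      have h1 : cellIdx δ γ i = 0 := by rw [h0]; rfl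
      unfold cellIdx at h1
      have h2 := abs_sub_round ((γ i - round (γ i))/δ)
      rw [h1] at h2
      rw [Int.cast_zero, sub_zero] at h2
      have h3 : 1 ≤ |(γ i - round (γ i))/δ| := by
        rw [abs_div, abs_of_pos hδpos, le_div_iff₀ hδpos, one_mul]
        exact hi
      linarith
    · rw [hP, Fintype.mem_piFinset]
      intro i
      rw [Finset.mem_Icc]
      have hx2 : |γ i - round (γ i)| ≤ 1/2 := abs_sub_round (γ i)
      set y := (γ i - round (γ i))/δ with hy
      have h2 : |y - round y| ≤ 1/2 := abs_sub_round y
      have h3 : |((cellIdx δ γ i : ℤ) : ℝ)| ≤ |y| + 1/2 := by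
        unfold cellIdx
        rw [← hy]
        calc |((round y : ℤ) : ℝ)| = |y - (y - round y)| := by congr 1; ring
          _ ≤ |y| + |y - round y| := abs_sub _ _
          _ ≤ |y| + 1/2 := by linarith
      have h4 : |y| ≤ (m:ℝ)/12 := by
        rw [hy, hδdef, abs_div, abs_of_pos (show (0:ℝ) < β/m from hδpos)]
        rw [div_le_iff₀ (show (0:ℝ) < β/m from hδpos)]
        have : (m:ℝ)/12 * (β/m) = β/12 := by field_simp
        rw [this]
        linarith
      have h5 : |((cellIdx δ γ i : ℤ) : ℝ)| ≤ (m:ℝ) := by nlinarith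
      have h6 : |cellIdx δ γ i| ≤ (m:ℤ) := by exact_mod_cast h5
      rw [abs_le] at h6
      omega
  -- the master sum
  set S := ∑ j ∈ Finset.Icc (-(m:ℤ)) (m:ℤ), wt b j with hSdef
  have hSnn : 0 ≤ S := Finset.sum_nonneg fun j _ => wt_nonneg b j
  have hMsum : ∑ γ ∈ Γ, (∏ i, wt b (cellIdx δ γ i)) ≤ S^d - 1 := by
    calc ∑ γ ∈ Γ, ∏ i, wt b (cellIdx δ γ i)
        = ∑ k ∈ Γ.image (cellIdx δ), ∏ i, wt b (k i) :=
          (Finset.sum_image (f := fun k : Fin d → ℤ => ∏ i, wt b (k i)) hinj).symm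
      _ ≤ ∑ k ∈ P.erase 0, ∏ i, wt b (k i) := by
          apply Finset.sum_le_sum_of_subset_of_nonneg
          · intro k hk
            obtain ⟨γ, hγ, rfl⟩ := Finset.mem_image.mp hk
            exact hccmem γ hγ
          · intro k _ _
            exact Finset.prod_nonneg fun i _ => wt_nonneg b _
      _ = (∑ k ∈ P, ∏ i, wt b (k i)) - ∏ i : Fin d, wt b ((0 : Fin d → ℤ) i) :=
          Finset.sum_erase_eq_sub h0P
      _ = S^d - 1 := by
          rw [← Finset.prod_univ_sum]
          simp [wt_zero, ← hSdef]
  have h0mem : (0:ℤ) ∈ Finset.Icc (-(m:ℤ)) (m:ℤ)  := by rw [Finset.mem_Icc]; omega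
  set ε : ℝ := 10 * (b⁻¹)^2 with hεdef
  have hεnn : (0:ℝ) ≤ ε := by positivity
  have hS : S ≤ 1 + ε := by
    rw [hSdef, ← Finset.sum_erase_add _ _ h0mem, wt_zero]
    have hsplit : (Finset.Icc (-(m:ℤ)) (m:ℤ)).erase 0
        = Finset.Icc (-(m:ℤ)) (-1) ∪ Finset.Icc 1 (m:ℤ) := by
      ext k
      simp only [Finset.mem_erase, Finset.mem_Icc, Finset.mem_union]
      omega
    have hdisj : Disjoint (Finset.Icc (-(m:ℤ)) (-1)) (Finset.Icc 1 (m:ℤ)) := by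
      rw [Finset.disjoint_left]
      intro a ha hb
      rw [Finset.mem_Icc] at ha hb
      omega
    rw [hsplit, Finset.sum_union hdisj]
    have hneg : Finset.Icc (-(m:ℤ)) (-1) = Finset.image Neg.neg (Finset.Icc 1 (m:ℤ)) := by
      ext k
      simp only [Finset.mem_Icc, Finset.mem_image]
      constructor
      · intro hk
        exact ⟨-k, by omega, by omega⟩
      · rintro ⟨a, ha, rfl⟩
        omega
    rw [hneg, Finset.sum_image (by intro a _ c _ hac; omega)]
    have hwtneg : ∀ j ∈ Finset.Icc (1:ℤ) (m:ℤ), wt b (-j) = wt b j := by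
      intro j _
      unfold wt
      rw [show ((-j : ℤ) : ℝ) = -(j:ℝ) by push_cast; ring, abs_neg]
      simp only [neg_eq_zero]
    rw [Finset.sum_congr rfl hwtneg]
    have hone : ∑ j ∈ Finset.Icc (1:ℤ) (m:ℤ), wt b j ≤ (b⁻¹)^2 * 5 := by
      have h1 : ∀ j ∈ Finset.Icc (1:ℤ) (m:ℤ), wt b j = (b⁻¹)^2 * (((j:ℝ) - 1/2)⁻¹)^2 := by
        intro j hj
        rw [Finset.mem_Icc] at hj
        unfold wt
        rw [if_neg (by omega)]
        rw [abs_of_pos (show (0:ℝ) < (j:ℝ) by exact_mod_cast hj.1), mul_inv, mul_pow]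
      rw [Finset.sum_congr rfl h1, ← Finset.mul_sum]
      have h2 := sum_inv_sq_le m hm
      have h3 : (0:ℝ) ≤ (b⁻¹)^2 := by positivity
      have h4 : (0:ℝ) < 1/(m:ℝ) := by positivity
      nlinarith [mul_le_mul_of_nonneg_left h2 h3]
    rw [hεdef]
    linarith
  have hεle : ε ≤ 10/(16*β^2) := by
    rw [hεdef]
    have h1 : b⁻¹ ≤ (4*β)⁻¹ := by
      apply inv_anti₀ (by positivity) hb4β
    have h2 : (b⁻¹)^2 ≤ ((4*β)⁻¹)^2 := pow_le_pow_left₀ (by positivity) h1 2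
    have h3 : ((4*β)⁻¹)^2 = (16*β^2)⁻¹ := by
      rw [inv_pow]
      congr 1
      ring
    rw [h3] at h2
    rw [div_eq_mul_inv]
    linarith
  have h2dε : 2*(d:ℝ)*ε ≤ 5*(d:ℝ)/(4*β^2) := by
    have h1 := mul_le_mul_of_nonneg_left hεle (by positivity : (0:ℝ) ≤ 2*(d:ℝ))
    have heq : 2*(d:ℝ)*(10/(16*β^2)) = 5*(d:ℝ)/(4*β^2) := by
      field_simp
      ring
    linarith
  have h2dε1 : 2*(d:ℝ)*ε ≤ 1 := by
    have h1 : 5*(d:ℝ)/(4*β^2) ≤ 1 := by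
      rw [div_le_one (by positivity)]
      have hpi9 : 9 ≤ π^2 := by nlinarith
      have h9d : 9*(d:ℝ) ≤ π^2*(d:ℝ) := mul_le_mul_of_nonneg_right hpi9 (by positivity)
      linarith
    linarith
  have hMfinal : ∑ γ ∈ Γ, (∏ i, wt b (cellIdx δ γ i)) ≤ 5*(d:ℝ)/(4*β^2) := by
    have h1 : S^d ≤ (1+ε)^d := pow_le_pow_left₀ hSnn hS d
    have h2 := pow_one_add_le hεnn d h2dε1
    calc ∑ γ ∈ Γ, (∏ i, wt b (cellIdx δ γ i)) ≤ S^d - 1 := hMsum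
      _ ≤ (1+ε)^d - 1 := by linarith
      _ ≤ 2*(d:ℝ)*ε := by linarith
      _ ≤ 5*(d:ℝ)/(4*β^2) := h2dε
  have hprodnn : ∀ γ : EuclideanSpace ℝ (Fin d), (0:ℝ) ≤ ∏ i, wt b (cellIdx δ γ i) :=
    fun γ => Finset.prod_nonneg fun i _ => wt_nonneg b _
  constructor
  · calc ∑ γ ∈ Γ, sqDirKer d m γ ^ 2
        ≤ ∑ γ ∈ Γ, ∏ i, wt b (cellIdx δ γ i) := by
          apply Finset.sum_le_sum
          intro γ _
          unfold sqDirKer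
          rw [← Finset.prod_pow]
          exact Finset.prod_le_prod (fun i _ => sq_nonneg _) (fun i _ => keyA γ i)
      _ ≤ 5*(d:ℝ)/(4*β^2) := hMfinal
      _ ≤ 4 * π^2 * (d:ℝ) / β^2 := by
          rw [div_le_div_iff₀ (by positivity) (by positivity)]
          have hpi9 : 9 ≤ π^2 := by nlinarith
          nlinarith [mul_le_mul_of_nonneg_right hpi9
            (show (0:ℝ) ≤ (d:ℝ)*β^2 by positivity)]
  · have hptG : ∀ γ : EuclideanSpace ℝ (Fin d), ‖gradient (sqDirKer d m) γ‖^2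
        ≤ 36*π^2*(m:ℝ)^2*(d:ℝ) * ∏ i, wt b (cellIdx δ γ i) := by
      intro γ
      rw [gradient_sqDirKer_norm_sq]
      have hterm : ∀ i : Fin d,
          ((∏ j ∈ Finset.univ.erase i, dirKer m (γ j)) * dirKer' m (γ i))^2
            ≤ 36*π^2*(m:ℝ)^2 * ∏ j, wt b (cellIdx δ γ j) := by
        intro i
        have e1 : ((∏ j ∈ Finset.univ.erase i, dirKer m (γ j)) * dirKer' m (γ i))^2
            = (∏ j ∈ Finset.univ.erase i, (dirKer m (γ j))^2) * (dirKer' m (γ i))^2 := by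
          rw [mul_pow, ← Finset.prod_pow]
        rw [e1]
        have h2 : ∏ j ∈ Finset.univ.erase i, (dirKer m (γ j))^2
            ≤ ∏ j ∈ Finset.univ.erase i, wt b (cellIdx δ γ j) :=
          Finset.prod_le_prod (fun _ _ => sq_nonneg _) (fun j _ => keyA γ j)
        have h3 := keyB γ i
        calc (∏ j ∈ Finset.univ.erase i, (dirKer m (γ j))^2) * (dirKer' m (γ i))^2
            ≤ (∏ j ∈ Finset.univ.erase i, wt b (cellIdx δ γ j))
              * (36*π^2*(m:ℝ)^2 * wt b (cellIdx δ γ i)) := by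
              apply mul_le_mul h2 h3 (sq_nonneg _)
                (Finset.prod_nonneg fun j _ => wt_nonneg b _)
          _ = 36*π^2*(m:ℝ)^2
              * (wt b (cellIdx δ γ i) * ∏ j ∈ Finset.univ.erase i, wt b (cellIdx δ γ j)) := by
              ring
          _ = 36*π^2*(m:ℝ)^2 * ∏ j, wt b (cellIdx δ γ j) := by
              rw [Finset.mul_prod_erase Finset.univ
                (fun j => wt b (cellIdx δ γ j)) (Finset.mem_univ i)]
      calc ∑ i, ((∏ j ∈ Finset.univ.erase i, dirKer m (γ j)) * dirKer' m (γ i))^2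
          ≤ ∑ _i : Fin d, 36*π^2*(m:ℝ)^2 * ∏ j, wt b (cellIdx δ γ j) :=
            Finset.sum_le_sum fun i _ => hterm i
        _ = 36*π^2*(m:ℝ)^2*(d:ℝ) * ∏ j, wt b (cellIdx δ γ j) := by
            rw [Finset.sum_const, Finset.card_univ, Fintype.card_fin, nsmul_eq_mul]
            ring
    calc ∑ γ ∈ Γ, ‖gradient (sqDirKer d m) γ‖^2
        ≤ ∑ γ ∈ Γ, 36*π^2*(m:ℝ)^2*(d:ℝ) * ∏ i, wt b (cellIdx δ γ i) :=
          Finset.sum_le_sum fun γ _ => hptG γ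
      _ = 36*π^2*(m:ℝ)^2*(d:ℝ) * ∑ γ ∈ Γ, ∏ i, wt b (cellIdx δ γ i) := by
          rw [Finset.mul_sum]
      _ ≤ 36*π^2*(m:ℝ)^2*(d:ℝ) * (5*(d:ℝ)/(4*β^2)) := by
          apply mul_le_mul_of_nonneg_left hMfinal (by positivity)
      _ ≤ 16 * π^4 * (d:ℝ)^2 * (m:ℝ)^2 / β^2 := by
          rw [show 36*π^2*(m:ℝ)^2*(d:ℝ) * (5*(d:ℝ)/(4*β^2))
            = (45*π^2*(m:ℝ)^2*(d:ℝ)^2)/β^2 by field_simp; ring]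
          rw [div_le_div_iff₀ (by positivity) (by positivity)]
          have hpi9 : 9 ≤ π^2 := by nlinarith
          nlinarith [mul_le_mul_of_nonneg_right hpi9
            (show (0:ℝ) ≤ π^2*(m:ℝ)^2*(d:ℝ)^2*β^2 by positivity),
            mul_pos (mul_pos (mul_pos (show (0:ℝ) < π^2 by positivity)
              (show (0:ℝ) < (m:ℝ)^2 by positivity)) (show (0:ℝ) < (d:ℝ)^2 by positivity))
              (show (0:ℝ) < β^2 by positivity)]

end
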